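/- (Gordan's theorem) For any real n × m matrix M, exactly one of the following holds: (i) there is s ∈ ℝ^m such that every coordinate of Ms is strictly negative; (ii) there is a nonzero u ∈ ℝⁿ with all coordinates nonnegative and uᵀM = 0. -/

import Mathlib

theorem stmt_13 (n m : ℕ) (M : Matrix (Fin n) (Fin m) ℝ) :
    Xor' (∃ s : Fin m → ℝ, ∀ i : Fin n, M.mulVec s i < 0)
         (∃ u : Fin n → ℝ, u ≠ 0 ∧ (∀ i, 0 ≤ u i) ∧ Matrix.vecMul u M = 0) := by
  suffices h : ((∃ s : Fin m → ℝ, ∀ i : Fin n, M.mulVec s i < 0) ∨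
      (∃ u : Fin n → ℝ, u ≠ 0 ∧ (∀ i, 0 ≤ u i) ∧ Matrix.vecMul u M = 0)) ∧
      ¬((∃ s : Fin m → ℝ, ∀ i : Fin n, M.mulVec s i < 0) ∧
      (∃ u : Fin n → ℝ, u ≠ 0 ∧ (∀ i, 0 ≤ u i) ∧ Matrix.vecMul u M = 0)) by
    obtain ⟨hor, hnand⟩ := h
    rcases hor with h1 | h2
    · exact Or.inl ⟨h1, fun h2 => hnand ⟨h1, h2⟩⟩
    · exact Or.inr ⟨h2, fun h1 => hnand ⟨h1, h2⟩⟩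
  constructor
  · -- at least one holds
    by_cases h0 : (0 : Fin m → ℝ) ∈ convexHull ℝ (Set.range (fun i => M i))
    · right
      rw [convexHull_range_eq_exists_affineCombination] at h0
      obtain ⟨s, w, hw0, hw1, hc⟩ := h0
      rw [Finset.affineCombination_eq_linear_combination _ _ _ hw1] at hc
      refine ⟨fun i => if i ∈ s then w i else 0, ?_, ?_, ?_⟩
      · intro h
        have : ∑ i ∈ s, w i = 0 := by
          have := congrFun h
          simp only [Pi.zero_apply] at this
          refine Finset.sum_eq_zero fun i hi => by simpa [hi] using this i
        rw [hw1] at this; norm_num at this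
      · intro i; dsimp only; split
        · exact hw0 i ‹_›
        · exact le_refl 0
      · funext j
        have := congrFun hc j
        simp only [Finset.sum_apply, Pi.smul_apply, smul_eq_mul, Pi.zero_apply] at this
        simp only [Matrix.vecMul, dotProduct, Pi.zero_apply]
        have heq : (∑ i : Fin n, (if i ∈ s then w i else 0) * M i j)
            = ∑ i ∈ s, w i * M i j := by
          rw [show (fun i => (if i ∈ s then w i else 0) * M i j)
              = fun i => (if i ∈ s then w i * M i j else 0) from funext fun i => by
            simp [ite_mul]]
          rw [Finset.sum_ite_mem, Finset.univ_inter]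
        rw [heq]; exact this
    · left
      have hfin : (Set.range (fun i : Fin n => M i)).Finite := Set.finite_range _
      obtain ⟨f, c, hfc, hsep⟩ := geometric_hahn_banach_point_closed
        (convex_convexHull ℝ _) (hfin.isCompact_convexHull (𝕜 := ℝ)).isClosed h0
      have hc0 : (0 : ℝ) < c := by simpa using hfc
      refine ⟨fun j => -f (fun k => if j = k then 1 else 0), fun i => ?_⟩
      have hMi : (0 : ℝ) < f (M i) :=
        hc0.trans (hsep _ (subset_convexHull ℝ _ ⟨i, rfl⟩))
      have hrep : f (M i) = ∑ j, M i j * f (fun k => if j = k then 1 else 0) := by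
        conv_lhs => rw [pi_eq_sum_univ (M i)]
        rw [map_sum]
        exact Finset.sum_congr rfl fun j _ => by rw [map_smul]; rfl
      have : M.mulVec (fun j => -f (fun k => if j = k then 1 else 0)) i = -∑ j, M i j * f (fun k => if j = k then 1 else 0) := by
        simp [Matrix.mulVec, dotProduct, Finset.sum_neg_distrib, mul_neg]
      rw [this, ← hrep]
      linarith
  · -- not both
    rintro ⟨⟨s, hs⟩, ⟨u, hu0, hunn, huM⟩⟩
    have h1 : dotProduct u (M.mulVec s) = 0 := by
      rw [Matrix.dotProduct_mulVec, huM, zero_dotProduct]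
    have h2 : dotProduct u (M.mulVec s) < 0 := by
      obtain ⟨i, hi⟩ := Function.ne_iff.mp hu0
      have hipos : 0 < u i := lt_of_le_of_ne (hunn i) (Ne.symm hi)
      have : ∑ j, u j * M.mulVec s j < ∑ j : Fin n, (0 : ℝ) := by
        refine Finset.sum_lt_sum (fun j _ => mul_nonpos_of_nonneg_of_nonpos (hunn j) (hs j).le)
          ⟨i, Finset.mem_univ i, mul_neg_of_pos_of_neg hipos (hs i)⟩
      simpa [dotProduct] using this
    linarith
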